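/- Let X be a compact metrizable topological space, let α : X ≃ₜ X be a homeomorphism, let B be a unital C*-algebra, let φ : C(X, ℂ) →⋆ₐ[ℂ] B be a star-algebra homomorphism, and let u ∈ B be a unitary such that star u * φ f * u = φ (f ∘ α) for every f ∈ C(X, ℂ). Fix x ∈ X and k ∈ ℕ. If h ∈ C(X, ℂ) satisfies h (α⁻ⁱ x) = 0 for every i = 0, 1, …, k−1 (where α⁻ⁱ denotes the i-th iterate of the inverse homeomorphism), then u ^ k * φ h belongs to A_x. -/

import Mathlib

/-- Lemma 4.2(i) of the paper, in the abstract covariant setting: if `h` vanishes at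
`x, α⁻¹ x, …, α⁻⁽ᵏ⁻¹⁾ x`, then `u ^ k * φ h` lies in the orbit-breaking subalgebra
`A_x`, the closed star-subalgebra of `B` generated by `φ(C(X)) ∪ u·φ(C₀(X ∖ {x}))`. -/
theorem pow_mul_mem_orbitBreaking
    {X : Type*} [TopologicalSpace X] [CompactSpace X] [TopologicalSpace.MetrizableSpace X]
    (α : X ≃ₜ X)
    {B : Type*} [CStarAlgebra B]
    (φ : C(X, ℂ) →⋆ₐ[ℂ] B)
    (u : B) (hu : star u * u = 1) (hu' : u * star u = 1)
    (hcov : ∀ f : C(X, ℂ), star u * φ f * u = φ (f.comp (α : C(X, X))))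
    (x : X) (k : ℕ) (h : C(X, ℂ))
    (hh : ∀ i : ℕ, i < k → h ((⇑α.symm)^[i] x) = 0) :
    u ^ k * φ h ∈
      closure (StarAlgebra.adjoin ℂ
        (Set.range (⇑φ) ∪ {b : B | ∃ g : C(X, ℂ), g x = 0 ∧ b = u * φ g}) : Set B) := by
  letI : MetricSpace X := TopologicalSpace.metrizableSpaceMetric X
  set S : StarSubalgebra ℂ B := StarAlgebra.adjoin ℂ
      (Set.range (⇑φ) ∪ {b : B | ∃ g : C(X, ℂ), g x = 0 ∧ b = u * φ g}) with hSdef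
  -- key covariance identity
  have key : ∀ f : C(X, ℂ), φ f * u = u * φ (f.comp (α : C(X, X))) := by
    intro f
    have := congrArg (u * ·) (hcov f)
    simp only [← mul_assoc, hu', one_mul] at this
    exact this
  induction k generalizing h with
  | zero =>
    have : φ h ∈ (S : Set B) :=
      StarAlgebra.subset_adjoin ℂ _ (Or.inl ⟨h, rfl⟩)
    simpa using subset_closure this
  | succ k ih =>
    -- show membership in closure (closure S)
    have hx0 : h x = 0 := by simpa using hh 0 (Nat.succ_pos k)
    rw [← closure_closure]
    rw [Metric.mem_closure_iff]
    intro ε hε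
    set C : ℝ := ‖u ^ (k + 1)‖ + 1 with hC
    have hCpos : 0 < C := by positivity
    set ε' : ℝ := ε / C with hε'
    have hε'pos : 0 < ε' := div_pos hε hCpos
    -- Urysohn function
    set U : Set X := {y | ‖h y‖ < ε'} with hU
    have hUopen : IsOpen U := by
      have : Continuous fun y => ‖h y‖ := h.continuous.norm
      exact isOpen_lt this continuous_const
    have hxU : x ∈ U := by simp [hU, hx0, hε'pos]
    obtain ⟨g, hg0, hg1, hg01⟩ := exists_continuous_zero_one_of_isClosed
      (isClosed_singleton (x := x)) (hUopen.isClosed_compl)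
      (by simpa [Set.disjoint_singleton_left] using hxU)
    set gC : C(X, ℂ) := ⟨fun y => (g y : ℂ), Complex.continuous_ofReal.comp g.continuous⟩
      with hgC
    have hgCx : gC x = 0 := by
      have := hg0 (Set.mem_singleton x)
      simp only [Pi.zero_apply] at this
      simp [hgC, this]
    -- the approximating element
    set h' : C(X, ℂ) := h.comp (α.symm : C(X, X)) with hh'def
    have hcomp : h'.comp (α : C(X, X)) = h := by
      ext y; simp [hh'def]
    have hmem : (u ^ k * φ h') * (u * φ gC) ∈ closure (S : Set B) := by
      have h1 : u ^ k * φ h' ∈ closure (S : Set B) := by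
        apply ih
        intro i hi
        have : h' ((⇑α.symm)^[i] x) = h ((⇑α.symm)^[i+1] x) := by
          simp [hh'def, Function.iterate_succ_apply']
        rw [this]
        exact hh (i+1) (Nat.succ_lt_succ hi)
      have h2 : u * φ gC ∈ closure (S : Set B) :=
        subset_closure (StarAlgebra.subset_adjoin ℂ _ (Or.inr ⟨gC, hgCx, rfl⟩))
      exact S.topologicalClosure.mul_mem h1 h2
    refine ⟨_, hmem, ?_⟩
    -- identify the product
    have hid : (u ^ k * φ h') * (u * φ gC) = u ^ (k+1) * φ (h * gC) := by
      rw [map_mul]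
      calc (u ^ k * φ h') * (u * φ gC) = u ^ k * (φ h' * u) * φ gC := by
            simp only [mul_assoc]
        _ = u ^ k * (u * φ (h'.comp (α : C(X,X)))) * φ gC := by rw [key]
        _ = u ^ (k+1) * (φ h * φ gC) := by rw [hcomp, pow_succ]; simp only [mul_assoc]
    rw [hid, dist_eq_norm]
    have hbound : ‖h - h * gC‖ ≤ ε' := by
      refine (ContinuousMap.norm_le _ hε'pos.le).mpr fun y => ?_
      by_cases hy : y ∈ U
      · have : (h - h * gC) y = h y * (1 - gC y) := by
          simp [ContinuousMap.sub_apply, ContinuousMap.mul_apply]; ring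
        rw [this, norm_mul]
        have h1 : ‖h y‖ ≤ ε' := le_of_lt hy
        have h2 : ‖(1 : ℂ) - gC y‖ ≤ 1 := by
          have := hg01 y
          have : ((1 : ℂ) - gC y) = ((1 - g y : ℝ) : ℂ) := by
            simp [hgC]
          rw [this, Complex.norm_real, Real.norm_eq_abs]
          rw [abs_le]
          constructor <;> [linarith [(hg01 y).2]; linarith [(hg01 y).1]]
        calc ‖h y‖ * ‖(1:ℂ) - gC y‖ ≤ ε' * 1 := mul_le_mul h1 h2 (norm_nonneg _) hε'pos.le
          _ = ε' := mul_one _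
      · have : gC y = 1 := by
          have := hg1 hy
          simpa [hgC] using congrArg Complex.ofReal this
        simp [ContinuousMap.sub_apply, ContinuousMap.mul_apply, this, hε'pos.le]
    calc ‖u ^ (k+1) * φ h - u ^ (k+1) * φ (h * gC)‖
        = ‖u ^ (k+1) * φ (h - h * gC)‖ := by rw [← mul_sub, ← map_sub]
      _ ≤ ‖u ^ (k+1)‖ * ‖φ (h - h * gC)‖ := norm_mul_le _ _
      _ ≤ ‖u ^ (k+1)‖ * ‖h - h * gC‖ := by
          gcongr; exact NonUnitalStarAlgHom.norm_apply_le φ _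
      _ ≤ ‖u ^ (k+1)‖ * ε' := by gcongr
      _ < C * ε' := by apply mul_lt_mul_of_pos_right _ hε'pos; simp [hC]
      _ = ε := by rw [hε']; field_simp [hCpos.ne']
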